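/- Let A be a Noetherian integrally closed (normal) integral domain and f ∈ A a nonzero element. Then, as subsets of the fraction field Frac(A), MO(A, f) = ⋂_p MO(A_p, f), where the intersection is over all prime ideals p of A of height one, A_p is the localization of A at p, and MO(A_p, f) is regarded as a subset of Frac(A) via the canonical inclusions A_p[f⁻¹] ⊆ Frac(A). -/

import Mathlib

/-- `MO(A,f)`: the subset of the localization `L` (with localization map `ι : A →+* L`)
consisting of those `x` with `ι f * x = ι a` for some `a` in the radical of `(f)`. -/
def MOset {A L : Type*} [CommRing A] [CommRing L] (ι : A →+* L) (f : A) : Set L :=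
  {x | ∃ a ∈ (Ideal.span {f}).radical, ι a = ι f * x}

lemma primeCompl_le_nonZeroDivisors {A : Type*} [CommRing A] [IsDomain A]
    (p : PrimeSpectrum A) :
    p.asIdeal.primeCompl ≤ (nonZeroDivisors A).comap (RingHom.id A) := by
  intro a ha
  simp only [Submonoid.mem_comap, RingHom.id_apply]
  exact mem_nonZeroDivisors_of_ne_zero fun h => ha (h ▸ p.asIdeal.zero_mem)

/-- The canonical inclusion `A_p → Frac(A)` for a prime `p` of a domain `A`. -/
noncomputable def atPrimeToFractionField {A : Type*} [CommRing A] [IsDomain A]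
    (K : Type*) [Field K] [Algebra A K] [IsFractionRing A K] (p : PrimeSpectrum A) :
    Localization.AtPrime p.asIdeal →+* K :=
  IsLocalization.map (S := Localization.AtPrime p.asIdeal) K (RingHom.id A)
    (primeCompl_le_nonZeroDivisors p)


open IsLocalRing

/-- If `(R,m)` is a Noetherian local integrally closed domain, `h ≠ 0`, `g ∉ (h)` and
`z*g ∈ (h)` for all `z ∈ m`, then `m` is principal. -/
lemma key_local {R : Type*} [CommRing R] [IsDomain R] [IsNoetherianRing R]
    [IsLocalRing R] [IsIntegrallyClosed R] (h g : R) (hh : h ≠ 0)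
    (hg : g ∉ Ideal.span {h})
    (hm : ∀ z ∈ maximalIdeal R, ∃ c : R, z * g = c * h) :
    ∃ y : R, maximalIdeal R = Ideal.span {y} := by
  set K := FractionRing R
  set ι := algebraMap R K with hι
  have hinj : Function.Injective ι := IsFractionRing.injective R K
  have hιh : ι h ≠ 0 := fun e => hh (hinj (by simpa using e))
  set x : K := ι g / ι h with hx
  have hxeq : ∀ r c : R, r * g = c * h → x * ι r = ι c := by
    intro r c e
    rw [hx, div_mul_eq_mul_div, div_eq_iff hιh, mul_comm (ι g) (ι r), ← map_mul, ← map_mul, e]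
  have hxn : ∀ r : R, ι r ≠ x := by
    intro r hr
    apply hg
    have : ι (r * h) = ι g := by
      rw [map_mul, hr, hx, div_mul_cancel₀ _ hιh]
    rw [Ideal.mem_span_singleton]
    exact ⟨r, (hinj this).symm ▸ (mul_comm r h ▸ rfl)⟩
  by_cases hcase : ∀ z ∈ maximalIdeal R, ∃ c ∈ maximalIdeal R, z * g = c * h
  · exfalso
    have hint : IsIntegral R x := by
      refine isIntegral_of_smul_mem_submodule
        (Submodule.map (Algebra.linearMap R K) (maximalIdeal R : Submodule R R)) ?_ ?_ x ?_
      · intro e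
        have hhm : h ∈ maximalIdeal R := by
          rw [mem_maximalIdeal, mem_nonunits_iff]
          intro hu
          exact hg (Ideal.mem_span_singleton.mpr (hu.dvd))
        have : ι h ∈ (⊥ : Submodule R K) := e ▸ Submodule.mem_map_of_mem hhm
        exact hιh (by simpa using this)
      · exact Submodule.FG.map _ (IsNoetherian.noetherian _)
      · rintro n ⟨z, hz, rfl⟩
        obtain ⟨c, hc, hce⟩ := hcase z hz
        have : x • (Algebra.linearMap R K z) = Algebra.linearMap R K c := by
          simpa [smul_eq_mul] using hxeq z c hce
        rw [this]
        exact Submodule.mem_map_of_mem hc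
    obtain ⟨r, hr⟩ := IsIntegrallyClosed.isIntegral_iff.mp hint
    exact hxn r hr
  · push_neg at hcase
    obtain ⟨z₀, hz₀m, hz₀⟩ := hcase
    obtain ⟨c₀, hc₀⟩ := hm z₀ hz₀m
    have hc₀x : x * ι z₀ = ι c₀ := hxeq _ _ hc₀
    have hc₀u : IsUnit c₀ := by
      by_contra hcu
      exact hz₀ c₀ (mem_maximalIdeal _ |>.mpr hcu) hc₀
    refine ⟨z₀, le_antisymm ?_ ?_⟩
    · intro z hz
      obtain ⟨c, hc⟩ := hm z hz
      have hcx : x * ι z = ι c := hxeq _ _ hc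
      have e : c₀ * z = z₀ * c := by
        apply hinj
        rw [map_mul, map_mul, ← hc₀x, ← hcx]; ring
      rw [Ideal.mem_span_singleton]
      obtain ⟨u, rfl⟩ := hc₀u
      refine ⟨(↑u⁻¹ : R) * c, ?_⟩
      calc z = ↑u⁻¹ * (↑u * z) := by rw [← mul_assoc, Units.inv_mul, one_mul]
        _ = ↑u⁻¹ * (z₀ * c) := by rw [e]
        _ = z₀ * (↑u⁻¹ * c) := by ring
    · rw [Ideal.span_le, Set.singleton_subset_iff]
      exact hz₀m


lemma prime_bot_of_principal_max {R : Type*} [CommRing R] [IsDomain R] [IsNoetherianRing R]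
    [IsLocalRing R] (y : R) (hm : maximalIdeal R = Ideal.span {y})
    (q : Ideal R) (hq : q.IsPrime) (hlt : q < maximalIdeal R) : q = ⊥ := by
  have hy : y ∉ q := by
    intro hy
    have : maximalIdeal R ≤ q := by
      rw [hm, Ideal.span_le, Set.singleton_subset_iff]; exact hy
    exact absurd (le_antisymm hlt.le this) hlt.ne
  have key : ∀ z ∈ q, ∀ n : ℕ, ∃ c ∈ q, z = y ^ n * c := by
    intro z hz n
    induction n with
    | zero => exact ⟨z, hz, by simp⟩
    | succ n ih =>
      obtain ⟨c, hcq, hce⟩ := ih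
      have hcm : c ∈ Ideal.span {y} := hm ▸ hlt.le hcq
      obtain ⟨c', hc'⟩ := Ideal.mem_span_singleton.mp hcm
      have hc'q : c' ∈ q := by
        rcases hq.mem_or_mem (hc' ▸ hcq) with h | h
        · exact absurd h hy
        · exact h
      exact ⟨c', hc'q, by rw [hce, hc', pow_succ]; ring⟩
  rw [eq_bot_iff]
  intro z hz
  have hbot : (⨅ n : ℕ, maximalIdeal R ^ n) = ⊥ :=
    Ideal.iInf_pow_eq_bot_of_isLocalRing _ (maximalIdeal.isMaximal R).ne_top
  have : z ∈ (⨅ n : ℕ, maximalIdeal R ^ n) := by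
    rw [Submodule.mem_iInf]
    intro n
    obtain ⟨c, _, hce⟩ := key z hz n
    rw [hm, Ideal.span_singleton_pow, Ideal.mem_span_singleton]
    exact ⟨c, hce⟩
  rw [hbot] at this
  simpa using this


lemma height_eq_one_of_colon {A : Type*} [CommRing A] [IsDomain A] [IsNoetherianRing A]
    [IsIntegrallyClosed A] (h g : A) (hh : h ≠ 0) (hg : g ∉ Ideal.span {h})
    (p : Ideal A) (hp : p.IsPrime)
    (hpc : ∀ z, z ∈ p ↔ z * g ∈ Ideal.span {h}) :
    Order.height (⟨p, hp⟩ : PrimeSpectrum A) = 1 := by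
  classical
  set R := Localization.AtPrime p with hR
  haveI : IsNoetherianRing R := IsLocalization.isNoetherianRing p.primeCompl R ‹_›
  haveI : IsIntegrallyClosed R :=
    isIntegrallyClosed_of_isLocalization R p.primeCompl p.primeCompl_le_nonZeroDivisors
  set φ := algebraMap A R with hφ
  have hinj : Function.Injective φ := IsLocalization.injective R p.primeCompl_le_nonZeroDivisors
  have hh' : φ h ≠ 0 := fun e => hh (hinj (by simpa using e))
  have hg' : φ g ∉ Ideal.span {φ h} := by
    intro hmem
    obtain ⟨t, ht⟩ := Ideal.mem_span_singleton.mp hmem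
    obtain ⟨c, s, hcs⟩ := IsLocalization.exists_mk'_eq p.primeCompl t
    have e1 : φ g * φ s = φ h * φ c := by
      rw [ht, ← hcs, mul_assoc, IsLocalization.mk'_spec]
    rw [← map_mul, ← map_mul] at e1
    obtain ⟨u, hu⟩ := (IsLocalization.eq_iff_exists p.primeCompl R).mp e1
    have : (↑u * ↑s : A) ∈ p := by
      rw [hpc]
      refine Ideal.mem_span_singleton.mpr ⟨↑u * c, ?_⟩
      calc ↑u * ↑s * g = ↑u * (g * ↑s) := by ring
        _ = ↑u * (h * c) := by rw [hu]
        _ = h * (↑u * c) := by ring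
    rcases hp.mem_or_mem this with h' | h'
    · exact u.2 h'
    · exact s.2 h'
  have hm : ∀ z ∈ maximalIdeal R, ∃ c : R, z * φ g = c * φ h := by
    have hmax : Ideal.map φ p = maximalIdeal R := Localization.AtPrime.map_eq_maximalIdeal
    intro z hz
    rw [← hmax] at hz
    let D : Ideal R :=
      { carrier := {z : R | ∃ c : R, z * φ g = c * φ h}
        add_mem' := by
          rintro a b ⟨c1, hc1⟩ ⟨c2, hc2⟩
          exact ⟨c1 + c2, by rw [add_mul, hc1, hc2, add_mul]⟩
        zero_mem' := ⟨0, by ring⟩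
        smul_mem' := by
          rintro r a ⟨c, hc⟩
          exact ⟨r * c, by rw [smul_eq_mul, mul_assoc, hc, mul_assoc]⟩ }
    have hD : Ideal.map φ p ≤ D := by
      rw [Ideal.map_le_iff_le_comap]
      intro z hz
      obtain ⟨c, hc⟩ := Ideal.mem_span_singleton.mp ((hpc z).mp hz)
      exact ⟨φ c, by rw [← map_mul, hc, map_mul, mul_comm]⟩
    exact hD hz
  obtain ⟨y, hy⟩ := key_local (φ h) (φ g) hh' hg' hm
  have hcomapbot : Ideal.comap φ (⊥ : Ideal R) = ⊥ := by
    ext z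
    simp [Ideal.mem_comap, map_eq_zero_iff φ hinj]
  refine le_antisymm ?_ ?_
  · rw [Order.height_le_iff']
    intro P hP
    by_contra hlen
    push_neg at hlen
    have hlen2 : 2 ≤ P.length := by
      have : (1 : ℕ∞) < P.length := hlen
      exact_mod_cast this
    set i0 : Fin (P.length + 1) := ⟨P.length - 2, by omega⟩
    set i1 : Fin (P.length + 1) := ⟨P.length - 1, by omega⟩
    have hq01 : P.toFun i0 < P.toFun i1 := P.strictMono (by simp [i0, i1, Fin.lt_def]; omega)
    have hq1p : P.toFun i1 < ⟨p, hp⟩ := by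
      have : P.toFun i1 < P.toFun (Fin.last P.length) :=
        P.strictMono (by simp [i1, Fin.lt_def]; omega)
      rwa [show P.toFun (Fin.last P.length) = P.last from rfl, hP] at this
    set q1 := P.toFun i1
    set q0 := P.toFun i0
    have hq1le : q1.asIdeal ≤ p := ((PrimeSpectrum.asIdeal_le_asIdeal _ _).mpr hq1p.le)
    have hdisj : Disjoint (↑p.primeCompl : Set A) ↑q1.asIdeal := by
      rw [Set.disjoint_left]
      intro a ha ha'
      exact ha (hq1le ha')
    have hQ1prime : (Ideal.map φ q1.asIdeal).IsPrime :=
      IsLocalization.isPrime_of_isPrime_disjoint p.primeCompl R _ q1.isPrime hdisj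
    have hQ1lt : Ideal.map φ q1.asIdeal < maximalIdeal R := by
      refine lt_of_le_of_ne ?_ ?_
      · rw [← Localization.AtPrime.map_eq_maximalIdeal]
        exact Ideal.map_mono hq1le
      · intro e
        have := congrArg (Ideal.comap φ) e
        rw [(show Ideal.comap φ (Ideal.map φ q1.asIdeal) = q1.asIdeal from
            IsLocalization.comap_map_of_isPrime_disjoint p.primeCompl R q1.isPrime hdisj),
          (show Ideal.comap φ (maximalIdeal R) = p from
            Localization.AtPrime.comap_maximalIdeal)] at this
        exact hq1p.ne (PrimeSpectrum.ext this)
    have hQ1bot := prime_bot_of_principal_max y hy _ hQ1prime hQ1lt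
    have hq1bot : q1.asIdeal = ⊥ := by
      rw [← (show Ideal.comap φ (Ideal.map φ q1.asIdeal) = q1.asIdeal from
          IsLocalization.comap_map_of_isPrime_disjoint p.primeCompl R q1.isPrime hdisj),
        hQ1bot, hcomapbot]
    have : q0.asIdeal < q1.asIdeal := (PrimeSpectrum.asIdeal_lt_asIdeal _ _).mpr hq01
    rw [hq1bot] at this
    exact not_lt_bot this
  · have hne : ¬ IsMin (⟨p, hp⟩ : PrimeSpectrum A) := by
      intro hmin
      have hple : (⟨p, hp⟩ : PrimeSpectrum A) ≤ ⟨⊥, Ideal.bot_prime⟩ :=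
        hmin ((PrimeSpectrum.asIdeal_le_asIdeal _ _).mp bot_le)
      have : p ≤ ⊥ := (PrimeSpectrum.asIdeal_le_asIdeal _ _).mpr hple
      have hhp : h ∈ p := (hpc h).mpr (Ideal.mem_span_singleton.mpr ⟨g, rfl⟩)
      exact hh (by simpa using this hhp)
    rw [ENat.one_le_iff_ne_zero]
    exact fun e => hne (Order.height_eq_zero.mp e)

lemma atPrime_comp {A : Type*} [CommRing A] [IsDomain A]
    (K : Type*) [Field K] [Algebra A K] [IsFractionRing A K] (p : PrimeSpectrum A) (a : A) :
    atPrimeToFractionField K p (algebraMap A (Localization.AtPrime p.asIdeal) a) =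
      algebraMap A K a := by
  have := IsLocalization.map_comp (S := Localization.AtPrime p.asIdeal) (Q := K)
    (primeCompl_le_nonZeroDivisors p)
  calc atPrimeToFractionField K p (algebraMap A (Localization.AtPrime p.asIdeal) a)
      = ((IsLocalization.map (S := Localization.AtPrime p.asIdeal) K (RingHom.id A)
          (primeCompl_le_nonZeroDivisors p)).comp
          (algebraMap A (Localization.AtPrime p.asIdeal))) a := rfl
    _ = ((algebraMap A K).comp (RingHom.id A)) a := by rw [this]
    _ = algebraMap A K a := rfl

lemma atPrime_injective {A : Type*} [CommRing A] [IsDomain A]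
    (K : Type*) [Field K] [Algebra A K] [IsFractionRing A K] (p : PrimeSpectrum A) :
    Function.Injective (atPrimeToFractionField K p) := by
  rw [injective_iff_map_eq_zero]
  intro z hz
  obtain ⟨a, s, rfl⟩ := IsLocalization.exists_mk'_eq p.asIdeal.primeCompl z
  have h1 : atPrimeToFractionField K p
      (IsLocalization.mk' (Localization.AtPrime p.asIdeal) a s *
        algebraMap A (Localization.AtPrime p.asIdeal) (s : A)) = algebraMap A K a := by
    rw [IsLocalization.mk'_spec, atPrime_comp]
  rw [map_mul, hz, zero_mul] at h1
  have ha : a = 0 := IsFractionRing.injective A K (by rw [← h1, map_zero])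
  rw [ha, IsLocalization.mk'_zero]


lemma exists_prime_colon {A : Type*} [CommRing A] [IsNoetherianRing A] (h g : A)
    (hg : g ∉ Ideal.span {h}) :
    ∃ (p : Ideal A) (_ : p.IsPrime) (g₀ : A), g₀ ∉ Ideal.span {h} ∧
      (∀ z, z ∈ p ↔ z * g₀ ∈ Ideal.span {h}) ∧
      ∀ z, z * g ∈ Ideal.span {h} → z ∈ p := by
  let C : A → Ideal A := fun g' => (Ideal.span {h}).colon (Ideal.span {g'})
  have hC : ∀ g' z, z ∈ C g' ↔ z * g' ∈ Ideal.span {h} := fun g' z => by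
    exact Ideal.mem_colon_span_singleton
  let S : Set (Ideal A) := {I | ∃ g', g' ∉ Ideal.span {h} ∧ I = C g' ∧ C g ≤ I}
  have hSne : S.Nonempty := ⟨C g, g, hg, rfl, le_rfl⟩
  obtain ⟨J, hJS, hJmax⟩ := (set_has_maximal_iff_noetherian.mpr ‹IsNoetherianRing A›) S hSne
  obtain ⟨g₀, hg₀, rfl, hCg⟩ := hJS
  have hprime : (C g₀).IsPrime := by
    constructor
    · intro htop
      exact hg₀ (by simpa [hC g₀ 1] using (htop ▸ Submodule.mem_top : (1 : A) ∈ C g₀))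
    · intro a b hab
      by_cases hb : b ∈ C g₀
      · exact Or.inr hb
      · left
        have hbg₀ : b * g₀ ∉ Ideal.span {h} := fun hmem => hb ((hC g₀ b).mpr hmem)
        have hmem : C (b * g₀) ∈ S := by
          refine ⟨b * g₀, hbg₀, rfl, le_trans hCg ?_⟩
          intro z hz
          rw [hC] at hz ⊢
          have : z * (b * g₀) = b * (z * g₀) := by ring
          rw [this]
          exact Ideal.mul_mem_left _ _ hz
        have hle : C g₀ ≤ C (b * g₀) := by
          intro z hz
          rw [hC] at hz ⊢
          have : z * (b * g₀) = b * (z * g₀) := by ring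
          rw [this]
          exact Ideal.mul_mem_left _ _ hz
        have heq : C (b * g₀) = C g₀ := by
          by_contra hne
          exact hJmax _ hmem (hle.lt_of_ne (Ne.symm hne))
        rw [← heq, hC]
        have : a * (b * g₀) = a * b * g₀ := by ring
        rw [this]
        exact (hC g₀ (a * b)).mp hab
  exact ⟨C g₀, hprime, g₀, hg₀, hC g₀, fun z hz => hCg ((hC g z).mpr hz)⟩

lemma exists_mem_range_of_forall {A : Type*} [CommRing A] [IsDomain A] [IsNoetherianRing A]
    [IsIntegrallyClosed A] (K : Type*) [Field K] [Algebra A K] [IsFractionRing A K]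
    (y : K)
    (H : ∀ p : PrimeSpectrum A, Order.height p = 1 →
      ∃ s c : A, s ∉ p.asIdeal ∧ algebraMap A K s * y = algebraMap A K c) :
    ∃ a : A, algebraMap A K a = y := by
  obtain ⟨g, ⟨h, hh⟩, rfl⟩ := IsLocalization.exists_mk'_eq (nonZeroDivisors A) y
  have hh0 : h ≠ 0 := nonZeroDivisors.ne_zero hh
  by_cases hgh : g ∈ Ideal.span {h}
  · obtain ⟨c, hc⟩ := Ideal.mem_span_singleton.mp hgh
    refine ⟨c, ?_⟩
    rw [IsLocalization.eq_mk'_iff_mul_eq, ← map_mul, mul_comm, ← hc]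
  · obtain ⟨p, hp, g₀, hg₀, hpc, hle⟩ := exists_prime_colon h g hgh
    have hht := height_eq_one_of_colon h g₀ hh0 hg₀ p hp hpc
    obtain ⟨s, c, hs, hsc⟩ := H ⟨p, hp⟩ hht
    exfalso
    have h1 : algebraMap A K s * IsLocalization.mk' K g ⟨h, hh⟩ * algebraMap A K h
        = algebraMap A K c * algebraMap A K h := by rw [hsc]
    rw [mul_assoc, IsLocalization.mk'_spec] at h1
    rw [← map_mul, ← map_mul] at h1
    have e : s * g = c * h := IsFractionRing.injective A K h1
    exact hs (hle s (Ideal.mem_span_singleton.mpr ⟨c, by rw [e, mul_comm]⟩))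

lemma mem_radical_of_forall {A : Type*} [CommRing A] [IsDomain A] [IsNoetherianRing A]
    [IsIntegrallyClosed A] (f a : A) (hf : f ≠ 0)
    (H : ∀ p : PrimeSpectrum A, Order.height p = 1 →
      ∃ (n : ℕ) (s : A), s ∉ p.asIdeal ∧ s * a ^ n ∈ Ideal.span {f}) :
    a ∈ (Ideal.span {f}).radical := by
  by_contra hrad
  have hpow : ∀ n, a ^ n ∉ Ideal.span {f} := fun n hn =>
    hrad (Ideal.mem_radical_iff.mpr ⟨n, hn⟩)
  have hmono : Monotone (fun n => (Ideal.span {f}).colon (Ideal.span {a ^ n})) := by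
    intro n m hnm
    obtain ⟨k, rfl⟩ := Nat.exists_eq_add_of_le hnm
    intro z hz
    rw [Ideal.mem_colon_span_singleton] at hz ⊢
    rw [pow_add, show z * (a ^ n * a ^ k) = z * a ^ n * a ^ k by ring]
    exact Ideal.mul_mem_right _ _ hz
  let D : ℕ →o Ideal A := ⟨fun n => (Ideal.span {f}).colon (Ideal.span {a ^ n}), hmono⟩
  obtain ⟨N, hN⟩ := monotone_stabilizes_iff_noetherian.mpr ‹IsNoetherianRing A› D
  obtain ⟨p, hp, g₀, hg₀, hpc, hle⟩ := exists_prime_colon f (a ^ N) (hpow N)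
  have hht := height_eq_one_of_colon f g₀ hf hg₀ p hp hpc
  obtain ⟨n, s, hs, hsa⟩ := H ⟨p, hp⟩ hht
  apply hs
  have h1 : s ∈ D n := Ideal.mem_colon_span_singleton.mpr hsa
  have h2 : D n ≤ D N := by
    have := hN (n ⊔ N) le_sup_right
    exact le_trans (hmono (le_sup_left : n ≤ n ⊔ N)) (le_of_eq this.symm)
  exact hle s (Ideal.mem_colon_span_singleton.mp (h2 h1))


/-- for a Noetherian integrally closed domain `A` and `0 ≠ f ∈ A`,
inside the fraction field `K = Frac(A)` one has
`MO(A,f) = ⋂_{ht p = 1} MO(A_p, f)`, the intersection over height-one primes. -/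
theorem stmt5 {A : Type*} [CommRing A] [IsDomain A] [IsNoetherianRing A]
    [IsIntegrallyClosed A] (f : A) (hf : f ≠ 0)
    (K : Type*) [Field K] [Algebra A K] [IsFractionRing A K] :
    MOset (algebraMap A K) f =
      ⋂ (p : PrimeSpectrum A) (_ : Order.height p = 1),
        MOset (atPrimeToFractionField K p)
          (algebraMap A (Localization.AtPrime p.asIdeal) f) := by
  ext x
  simp only [Set.mem_iInter]
  constructor
  · rintro ⟨a, ha, hax⟩ p hp1
    refine ⟨algebraMap A (Localization.AtPrime p.asIdeal) a, ?_, ?_⟩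
    · obtain ⟨n, hn⟩ := Ideal.mem_radical_iff.mp ha
      obtain ⟨t, ht⟩ := Ideal.mem_span_singleton.mp hn
      refine Ideal.mem_radical_iff.mpr ⟨n, Ideal.mem_span_singleton.mpr
        ⟨algebraMap A (Localization.AtPrime p.asIdeal) t, ?_⟩⟩
      rw [← map_pow, ht, map_mul]
    · rw [atPrime_comp, atPrime_comp, hax]
  · intro H
    have hstep1 : ∃ a : A, algebraMap A K a = algebraMap A K f * x := by
      apply exists_mem_range_of_forall
      intro p hp1
      obtain ⟨b, hbrad, hbx⟩ := H p hp1
      obtain ⟨c, s, hcs⟩ := IsLocalization.exists_mk'_eq p.asIdeal.primeCompl b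
      refine ⟨(s : A), c, s.2, ?_⟩
      have e1 : atPrimeToFractionField K p b * algebraMap A K s = algebraMap A K c := by
        rw [← atPrime_comp K p (s : A), ← map_mul, ← hcs, IsLocalization.mk'_spec,
          atPrime_comp]
      rw [hbx, atPrime_comp] at e1
      rw [← e1]; ring
    obtain ⟨a, ha⟩ := hstep1
    refine ⟨a, ?_, ha⟩
    apply mem_radical_of_forall f a hf
    intro p hp1
    obtain ⟨b, hbrad, hbx⟩ := H p hp1
    have hba : b = algebraMap A (Localization.AtPrime p.asIdeal) a := by
      apply atPrime_injective K p
      rw [hbx, atPrime_comp, atPrime_comp, ha]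
    rw [hba] at hbrad
    obtain ⟨n, hn⟩ := Ideal.mem_radical_iff.mp hbrad
    obtain ⟨t, ht⟩ := Ideal.mem_span_singleton.mp hn
    obtain ⟨c, s, hcs⟩ := IsLocalization.exists_mk'_eq p.asIdeal.primeCompl t
    set φ := algebraMap A (Localization.AtPrime p.asIdeal)
    have e2 : φ (a ^ n * s) = φ (f * c) := by
      rw [map_mul, map_mul, map_pow, ht, ← hcs, mul_assoc, IsLocalization.mk'_spec]
    obtain ⟨u, hu⟩ := (IsLocalization.eq_iff_exists p.asIdeal.primeCompl
      (Localization.AtPrime p.asIdeal)).mp e2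
    refine ⟨n, (u : A) * (s : A), ?_, ?_⟩
    · intro hmem
      rcases p.isPrime.mem_or_mem hmem with h' | h'
      · exact u.2 h'
      · exact s.2 h'
    · refine Ideal.mem_span_singleton.mpr ⟨(u : A) * c, ?_⟩
      calc (u : A) * (s : A) * a ^ n = (u : A) * (a ^ n * (s : A)) := by ring
        _ = (u : A) * (f * c) := hu
        _ = f * ((u : A) * c) := by ring
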